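/- Fix positive integers m, n, d, a real B ≥ 0, and a function f : ℕⁿ → ℝ with 0 ≤ f(X) ≤ B for all X ∈ ℕⁿ. Then d·∫_{1/(2d)}^{3/(2d)} [ Σ_{X ∈ ℕⁿ} ( (f(X) − p)² + ((p − 1/(2d))·(3/(2d) − p)/p)·(f(X) − p)·Σᵢ₌₁ⁿ (Xᵢ − m·p) )·∏ᵢ₌₁ⁿ e^{−m·p}·(m·p)^{Xᵢ}/Xᵢ! ] dp ≥ 1/(12·d²). (The left-hand side is the expectation of (f(X)−p)² + ((p−1/(2d))(3/(2d)−p)/p)·(f(X)−p)·Σᵢ(Xᵢ−m·p) when p is uniform on [1/(2d), 3/(2d)] and, conditionally on p, the coordinates X₁,…,Xₙ are i.i.d. Poisson(m·p).) -/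

import Mathlib

open MeasureTheory

noncomputable section StmtAux
namespace StmtAux

def pois (l : ℝ) (k : ℕ) : ℝ := Real.exp (-l) * l ^ k / (k.factorial : ℝ)

lemma pois_nonneg {l : ℝ} (hl : 0 ≤ l) (k : ℕ) : 0 ≤ pois l k := by
  unfold pois; positivity

lemma hasSum_pois {l : ℝ} (hl : 0 ≤ l) : HasSum (pois l) 1 := by
  have h : pois l = ProbabilityTheory.poissonPMFReal ⟨l, hl⟩ := rfl
  rw [h]; exact ProbabilityTheory.poissonPMFRealSum ⟨l, hl⟩

lemma hasSum_mul_pois {l : ℝ} (hl : 0 ≤ l) :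
    HasSum (fun k : ℕ => (k : ℝ) * pois l k) l := by
  have h : ∀ k : ℕ, ((k + 1 : ℕ) : ℝ) * pois l (k + 1) = l * pois l k := by
    intro k
    have hfac : (((k + 1).factorial : ℕ) : ℝ) = ((k : ℝ) + 1) * (k.factorial : ℝ) := by
      rw [Nat.factorial_succ]; push_cast; ring
    have h1 : (k.factorial : ℝ) ≠ 0 := Nat.cast_ne_zero.mpr k.factorial_ne_zero
    have h2 : ((k : ℝ) + 1) ≠ 0 := by positivity
    unfold pois
    rw [hfac]
    field_simp
    push_cast
    ring
  have h2 : HasSum (fun k : ℕ => ((k : ℕ) + 1 : ℝ) * pois l (k + 1)) l := by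
    have h5 := (hasSum_pois hl).mul_left l
    rw [mul_one] at h5
    rw [show (fun k : ℕ => ((k : ℕ) + 1 : ℝ) * pois l (k + 1)) = fun i => l * pois l i from
      funext fun k => by
        have := h k; push_cast at this ⊢; linarith [this]]
    exact h5
  have h3 := (hasSum_nat_add_iff (f := fun k : ℕ => (k : ℝ) * pois l k) 1).mp (by
    show HasSum (fun k : ℕ => ((k + 1 : ℕ) : ℝ) * pois l (k + 1)) l
    rw [show (fun k : ℕ => ((k + 1 : ℕ) : ℝ) * pois l (k + 1)) =
        fun k : ℕ => ((k : ℕ) + 1 : ℝ) * pois l (k + 1) from funext fun k => by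
      push_cast; ring_nf]
    exact h2)
  simpa using h3

lemma prod_pois_nonneg {l : ℝ} (hl : 0 ≤ l) {n : ℕ} (X : Fin n → ℕ) :
    0 ≤ ∏ i, pois l (X i) :=
  Finset.prod_nonneg fun i _ => pois_nonneg hl _

lemma hasSum_W {l : ℝ} (hl : 0 ≤ l) (n : ℕ) :
    HasSum (fun X : Fin n → ℕ => ∏ i, pois l (X i)) 1 := by
  induction n with
  | zero =>
      have h : (fun X : Fin 0 → ℕ => ∏ i, pois l (X i)) = fun _ => 1 := by
        funext X; simp
      rw [h]
      exact hasSum_single (f := fun _ : Fin 0 → ℕ => (1:ℝ)) (fun _ => 0)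
        (fun b hb => absurd (funext fun i => i.elim0) hb)
  | succ n ih =>
      have hq := hasSum_pois hl
      have hsummul : Summable (fun z : ℕ × (Fin n → ℕ) => pois l z.1 * ∏ i, pois l (z.2 i)) :=
        Summable.mul_of_nonneg (f := pois l) (g := fun Y : Fin n → ℕ => ∏ i, pois l (Y i))
          hq.summable ih.summable (fun k => pois_nonneg hl k) (fun Y => prod_pois_nonneg hl Y)
      have hmul : HasSum (fun z : ℕ × (Fin n → ℕ) => pois l z.1 * ∏ i, pois l (z.2 i)) 1 := by
        have := hq.mul ih hsummul
        simpa using this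
      rw [← (Fin.consEquiv (fun _ : Fin (n+1) => ℕ)).hasSum_iff]
      convert hmul using 1
      funext z
      obtain ⟨k, Y⟩ := z
      show (∏ i, pois l (Fin.cons (α := fun _ => ℕ) k Y i)) = _
      rw [Fin.prod_univ_succ]
      simp

lemma hasSum_TW {l : ℝ} (hl : 0 ≤ l) (n : ℕ) :
    HasSum (fun X : Fin n → ℕ => (∑ i, (X i : ℝ)) * ∏ i, pois l (X i)) ((n : ℝ) * l) := by
  induction n with
  | zero =>
      have h : (fun X : Fin 0 → ℕ => (∑ i, (X i : ℝ)) * ∏ i, pois l (X i)) = fun _ => 0 := by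
        funext X; simp
      rw [h]
      have h0 : ((0:ℕ) : ℝ) * l = 0 := by simp
      rw [Nat.cast_zero, zero_mul]
      exact hasSum_zero
  | succ n ihT =>
      have ihW := hasSum_W hl n
      have hq := hasSum_pois hl
      have hkq := hasSum_mul_pois hl
      have hWnn : ∀ Y : Fin n → ℕ, (0:ℝ) ≤ ∏ i, pois l (Y i) := fun Y => prod_pois_nonneg hl Y
      have hTWnn : ∀ Y : Fin n → ℕ, (0:ℝ) ≤ (∑ i, (Y i : ℝ)) * ∏ i, pois l (Y i) := by
        intro Y
        exact mul_nonneg (Finset.sum_nonneg fun i _ => Nat.cast_nonneg _) (hWnn Y)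
      have h1 : HasSum (fun z : ℕ × (Fin n → ℕ) =>
          ((z.1 : ℝ) * pois l z.1) * ∏ i, pois l (z.2 i)) (l * 1) :=
        HasSum.mul (f := fun k : ℕ => (k : ℝ) * pois l k) (g := fun Y : Fin n → ℕ => ∏ i, pois l (Y i)) hkq ihW (Summable.mul_of_nonneg (f := fun k : ℕ => (k : ℝ) * pois l k)
          (g := fun Y : Fin n → ℕ => ∏ i, pois l (Y i)) hkq.summable ihW.summable
          (fun k => mul_nonneg (Nat.cast_nonneg _) (pois_nonneg hl _)) hWnn)
      have h2 : HasSum (fun z : ℕ × (Fin n → ℕ) =>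
          pois l z.1 * ((∑ i, (z.2 i : ℝ)) * ∏ i, pois l (z.2 i))) (1 * ((n : ℝ) * l)) :=
        HasSum.mul (f := pois l) (g := fun Y : Fin n → ℕ => (∑ i, (Y i : ℝ)) * ∏ i, pois l (Y i)) hq ihT (Summable.mul_of_nonneg (f := pois l)
          (g := fun Y : Fin n → ℕ => (∑ i, (Y i : ℝ)) * ∏ i, pois l (Y i))
          hq.summable ihT.summable (fun k => pois_nonneg hl _) hTWnn)
      have hadd := h1.add h2
      rw [← (Fin.consEquiv (fun _ : Fin (n+1) => ℕ)).hasSum_iff]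
      convert hadd using 1
      · funext z
        obtain ⟨k, Y⟩ := z
        show (∑ i, ((Fin.cons (α := fun _ => ℕ) k Y i : ℕ) : ℝ)) *
            (∏ i, pois l (Fin.cons (α := fun _ => ℕ) k Y i)) = _
        rw [Fin.prod_univ_succ, Fin.sum_univ_succ]
        simp only [Fin.cons_zero, Fin.cons_succ]
        ring
      · push_cast; ring

lemma continuous_W (c : ℝ) {n : ℕ} (X : Fin n → ℕ) :
    Continuous (fun p : ℝ => ∏ i, pois (c * p) (X i)) := by
  apply continuous_finset_prod
  intro i _
  unfold pois
  exact (((continuous_const.mul continuous_id).neg.rexp).mul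
    ((continuous_const.mul continuous_id).pow _)).div_const _

lemma prod_fac_pos {n : ℕ} (X : Fin n → ℕ) : (0:ℝ) < ∏ i, ((X i).factorial : ℝ) :=
  Finset.prod_pos fun i _ => by exact_mod_cast (X i).factorial_pos

lemma W_eq (c : ℝ) {n : ℕ} (X : Fin n → ℕ) (p : ℝ) :
    (∏ i, pois (c * p) (X i)) =
      Real.exp ((n : ℝ) * (-(c * p))) * (c * p) ^ (∑ i, X i) / ∏ i, ((X i).factorial : ℝ) := by
  unfold pois
  rw [Finset.prod_div_distrib, Finset.prod_mul_distrib, Finset.prod_const,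
    Finset.prod_pow_eq_pow_sum, Finset.card_univ, Fintype.card_fin, ← Real.exp_nat_mul]

lemma hasDerivAt_W (c : ℝ) {n : ℕ} (X : Fin n → ℕ) {p : ℝ} (hp : p ≠ 0) :
    HasDerivAt (fun q : ℝ => ∏ i, pois (c * q) (X i))
      ((((∑ i, (X i : ℝ)) - (n : ℝ) * (c * p)) / p) * ∏ i, pois (c * p) (X i)) p := by
  have hfun : (fun q : ℝ => ∏ i, pois (c * q) (X i)) =
      fun q => Real.exp ((n : ℝ) * (-(c * q))) * (c * q) ^ (∑ i, X i) /
        ∏ i, ((X i).factorial : ℝ) := by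
    funext q; exact W_eq c X q
  rw [hfun]
  set N := ∑ i, X i with hN
  have hC : (∏ i, ((X i).factorial : ℝ)) ≠ 0 := ne_of_gt (prod_fac_pos X)
  have e1 : HasDerivAt (fun q : ℝ => (n : ℝ) * (-(c * q))) (-((n : ℝ) * c)) p := by
    have : (fun q : ℝ => (n : ℝ) * (-(c * q))) = fun q => (-((n : ℝ) * c)) * q := by
      funext q; ring
    rw [this]
    simpa using (hasDerivAt_id p).const_mul (-((n : ℝ) * c))
  have e2 := e1.exp
  have e3 : HasDerivAt (fun q : ℝ => (c * q) ^ N) ((N : ℝ) * (c * p) ^ (N - 1) * c) p := by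
    have hin : HasDerivAt (fun q : ℝ => c * q) c p := by
      simpa using (hasDerivAt_id p).const_mul c
    exact (hasDerivAt_pow N (c * p)).comp p hin
  have e4 := (e2.mul e3).div_const (∏ i, ((X i).factorial : ℝ))
  refine e4.congr_deriv ?_
  have hcast : (∑ i, (X i : ℝ)) = (N : ℝ) := by rw [hN]; push_cast; rfl
  have hWe := W_eq c X p
  rw [← hN] at hWe
  rw [hcast, hWe]
  clear_value N
  rcases Nat.eq_zero_or_pos N with h0 | hpos
  · subst h0
    field_simp
    ring
  · have hN1 : N - 1 + 1 = N := Nat.succ_pred_eq_of_pos hpos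
    have hpow : (c * p) ^ N = (c * p) ^ (N - 1) * (c * p) := by
      rw [← pow_succ, hN1]
    rw [hpow]
    field_simp
    ring

lemma pois_le {l l' : ℝ} (h0 : 0 ≤ l) (h : l ≤ l') (k : ℕ) :
    pois l k ≤ Real.exp (l' - l) * pois l' k := by
  unfold pois
  have h2 : Real.exp (l' - l) * (Real.exp (-l') * l' ^ k / (k.factorial : ℝ))
      = Real.exp (-l) * l' ^ k / (k.factorial : ℝ) := by
    rw [mul_div_assoc', ← mul_assoc, ← Real.exp_add]
    ring_nf
  rw [h2]
  have hfk : (0:ℝ) < (k.factorial : ℝ) := by exact_mod_cast k.factorial_pos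
  gcongr

lemma prod_pois_le {l l' : ℝ} (h0 : 0 ≤ l) (h : l ≤ l') {n : ℕ} (X : Fin n → ℕ) :
    (∏ i, pois l (X i)) ≤ Real.exp (l' - l) ^ n * ∏ i, pois l' (X i) := by
  calc (∏ i, pois l (X i)) ≤ ∏ i, (Real.exp (l' - l) * pois l' (X i)) :=
        Finset.prod_le_prod (fun i _ => pois_nonneg h0 _) (fun i _ => pois_le h0 h _)
    _ = Real.exp (l' - l) ^ n * ∏ i, pois l' (X i) := by
        rw [Finset.prod_mul_distrib, Finset.prod_const, Finset.card_univ, Fintype.card_fin]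

def psi (a b p : ℝ) : ℝ := (p - a) * (b - p) - (p - (a + b) / 2) ^ 2

lemma continuous_psi (a b : ℝ) : Continuous (psi a b) := by
  unfold psi; fun_prop

def Phi (m n : ℕ) (a b : ℝ) (f : (Fin n → ℕ) → ℝ) (X : Fin n → ℕ) (p : ℝ) : ℝ :=
  ((f X - p) ^ 2 +
      ((p - a) * (b - p) / p) * (f X - p) * ((∑ i, (X i : ℝ)) - (n : ℝ) * ((m : ℝ) * p))) *
    ∏ i, pois ((m : ℝ) * p) (X i)

lemma integral_Phi_eq (m : ℕ) {n : ℕ} {a b : ℝ} (ha : 0 < a) (hab : a ≤ b)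
    (f : (Fin n → ℕ) → ℝ) (X : Fin n → ℕ) :
    ∫ p in a..b, Phi m n a b f X p =
      ∫ p in a..b,
        ((f X - (a + b) / 2) ^ 2 + psi a b p) * ∏ i, pois ((m : ℝ) * p) (X i) := by
  set W : ℝ → ℝ := fun p => ∏ i, pois ((m : ℝ) * p) (X i) with hW
  set T : ℝ := ∑ i, (X i : ℝ) with hT
  have hne : ∀ p ∈ Set.uIcc a b, p ≠ 0 := by
    intro p hp
    rw [Set.uIcc_of_le hab] at hp
    exact (lt_of_lt_of_le ha hp.1).ne'
  set G : ℝ → ℝ := fun p => (p - a) * (b - p) * (f X - p) * W p with hG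
  set G' : ℝ → ℝ := fun p =>
    ((a + b - 2 * p) * (f X - p) - (p - a) * (b - p)) * W p +
      ((p - a) * (b - p) * (f X - p)) * (((T - (n : ℝ) * ((m : ℝ) * p)) / p) * W p) with hG'
  have hderiv : ∀ p ∈ Set.uIcc a b, HasDerivAt G (G' p) p := by
    intro p hp
    have hWd := hasDerivAt_W (m : ℝ) X (hne p hp)
    have hpoly : HasDerivAt (fun q : ℝ => (q - a) * (b - q) * (f X - q))
        ((a + b - 2 * p) * (f X - p) - (p - a) * (b - p)) p := by
      have h1 := (((hasDerivAt_id p).sub_const a).mul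
          ((hasDerivAt_const p b).sub (hasDerivAt_id p))).mul
          ((hasDerivAt_const p (f X)).sub (hasDerivAt_id p))
      refine h1.congr_deriv ?_
      simp only [Pi.sub_apply, Pi.mul_apply, id_eq]
      ring
    have h2 := hpoly.mul hWd
    exact h2
  have hcontW : Continuous W := continuous_W (m : ℝ) X
  have hcontG' : ContinuousOn G' (Set.uIcc a b) := by
    rw [hG']
    apply ContinuousOn.add
    · exact (Continuous.continuousOn (by fun_prop)).mul hcontW.continuousOn
    · apply ContinuousOn.mul (Continuous.continuousOn (by fun_prop))
      apply ContinuousOn.mul _ hcontW.continuousOn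
      exact ContinuousOn.div (Continuous.continuousOn (by fun_prop)) continuousOn_id hne
  have hint : IntervalIntegrable G' MeasureTheory.volume a b :=
    hcontG'.intervalIntegrable
  have hint2 : IntervalIntegrable
      (fun p => ((f X - (a + b) / 2) ^ 2 + psi a b p) * W p) MeasureTheory.volume a b := by
    apply Continuous.intervalIntegrable
    exact (continuous_const.add (continuous_psi a b)).mul hcontW
  have hFTC := intervalIntegral.integral_eq_sub_of_hasDerivAt hderiv hint
  have hG0 : G b - G a = 0 := by rw [hG]; ring_nf
  have hdecomp : Set.EqOn (Phi m n a b f X)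
      (fun p => G' p + ((f X - (a + b) / 2) ^ 2 + psi a b p) * W p) (Set.uIcc a b) := by
    intro p hp
    have hp0 : p ≠ 0 := hne p hp
    simp only [hG', hW, hT, Phi, psi]
    field_simp
    ring
  rw [intervalIntegral.integral_congr hdecomp, intervalIntegral.integral_add hint hint2,
    hFTC, hG0, zero_add]

def bnd (m n : ℕ) (a b B : ℝ) (X : Fin n → ℕ) : ℝ :=
  ((B + b) ^ 2 + ((b - a) ^ 2 / a) * (B + b) * ((∑ i, (X i : ℝ)) + (n : ℝ) * ((m : ℝ) * b))) *
    (Real.exp ((m : ℝ) * (b - a)) ^ n * ∏ i, pois ((m : ℝ) * b) (X i))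

lemma bnd_nonneg {m n : ℕ} {a b B : ℝ} (ha : 0 < a) (hab : a ≤ b) (hB : 0 ≤ B)
    (X : Fin n → ℕ) : 0 ≤ bnd m n a b B X := by
  have hb : 0 ≤ b := (ha.trans_le hab).le
  have h1 : (0:ℝ) ≤ ∑ i, (X i : ℝ) := Finset.sum_nonneg fun i _ => Nat.cast_nonneg _
  have h2 := prod_pois_nonneg (l := (m : ℝ) * b) (by positivity) X
  unfold bnd
  positivity

lemma summable_bnd (m : ℕ) {n : ℕ} {a b : ℝ} (ha : 0 < a) (hab : a ≤ b) (B : ℝ) :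
    Summable (bnd m n a b B) := by
  have hb : (0:ℝ) ≤ (m : ℝ) * b := by
    have : (0:ℝ) ≤ b := (ha.trans_le hab).le
    positivity
  set K := Real.exp ((m : ℝ) * (b - a)) ^ n with hK
  set c1 := ((B + b) ^ 2 + ((b - a) ^ 2 / a) * (B + b) * ((n : ℝ) * ((m : ℝ) * b))) * K with hc1
  set c2 := ((b - a) ^ 2 / a) * (B + b) * K with hc2
  have hs := (((hasSum_W hb n).summable.mul_left c1).add
    (((hasSum_TW hb n).summable.mul_left c2)))
  apply hs.congr
  intro X
  simp only [hc1, hc2, hK]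
  unfold bnd
  ring

lemma W_le {m : ℕ} {n : ℕ} {a b : ℝ} (ha : 0 < a) (X : Fin n → ℕ) {p : ℝ}
    (hpa : a ≤ p) (hpb : p ≤ b) :
    (∏ i, pois ((m : ℝ) * p) (X i)) ≤
      Real.exp ((m : ℝ) * (b - a)) ^ n * ∏ i, pois ((m : ℝ) * b) (X i) := by
  have hp0 : (0:ℝ) ≤ (m : ℝ) * p := by
    have := ha.trans_le hpa
    positivity
  have hb0 : (0:ℝ) ≤ b := (ha.trans_le (hpa.trans hpb)).le
  have hmp : (m : ℝ) * p ≤ (m : ℝ) * b :=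
    mul_le_mul_of_nonneg_left hpb (Nat.cast_nonneg m)
  have h1 := prod_pois_le hp0 hmp X
  refine h1.trans ?_
  have h2 : Real.exp ((m : ℝ) * b - (m : ℝ) * p) ^ n ≤ Real.exp ((m : ℝ) * (b - a)) ^ n := by
    apply pow_le_pow_left₀ (Real.exp_nonneg _)
    apply Real.exp_le_exp.mpr
    nlinarith [Nat.cast_nonneg (α := ℝ) m]
  exact mul_le_mul_of_nonneg_right h2 (prod_pois_nonneg (by positivity) X)

lemma norm_Phi_le {m n : ℕ} {a b B : ℝ} (ha : 0 < a) (hab : a ≤ b) (hB : 0 ≤ B)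
    {f : (Fin n → ℕ) → ℝ} (hf : ∀ X, 0 ≤ f X ∧ f X ≤ B) (X : Fin n → ℕ) {p : ℝ}
    (hp : p ∈ Set.Ioc a b) : ‖Phi m n a b f X p‖ ≤ bnd m n a b B X := by
  obtain ⟨hpa, hpb⟩ := hp
  have hp0 : 0 < p := ha.trans hpa
  have hb : 0 < b := hp0.trans_le hpb
  have hWp : 0 ≤ ∏ i, pois ((m : ℝ) * p) (X i) :=
    prod_pois_nonneg (by positivity) X
  have hT : (0:ℝ) ≤ ∑ i, (X i : ℝ) := Finset.sum_nonneg fun i _ => Nat.cast_nonneg _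
  have h1 : |f X - p| ≤ B + b := by
    rw [abs_le]
    constructor
    · nlinarith [(hf X).1]
    · nlinarith [(hf X).2]
  have h2 : |(p - a) * (b - p) / p| ≤ (b - a) ^ 2 / a := by
    rw [abs_of_nonneg (div_nonneg (mul_nonneg (by linarith) (by linarith)) hp0.le)]
    apply div_le_div₀ (by positivity) ?_ ha hpa.le
    nlinarith
  have h3 : |(∑ i, (X i : ℝ)) - (n : ℝ) * ((m : ℝ) * p)| ≤
      (∑ i, (X i : ℝ)) + (n : ℝ) * ((m : ℝ) * b) := by
    have hmono : (n : ℝ) * ((m : ℝ) * p) ≤ (n : ℝ) * ((m : ℝ) * b) :=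
      mul_le_mul_of_nonneg_left (mul_le_mul_of_nonneg_left hpb (Nat.cast_nonneg m))
        (Nat.cast_nonneg n)
    have hnmp : (0:ℝ) ≤ (n : ℝ) * ((m : ℝ) * p) := by positivity
    rw [abs_le]
    constructor
    · linarith
    · linarith
  have h4 := W_le (m := m) ha X hpa.le hpb
  calc ‖Phi m n a b f X p‖
      ≤ (|f X - p| ^ 2 + |(p - a) * (b - p) / p| * |f X - p| *
          |(∑ i, (X i : ℝ)) - (n : ℝ) * ((m : ℝ) * p)|) *
        (∏ i, pois ((m : ℝ) * p) (X i)) := by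
        unfold Phi
        rw [Real.norm_eq_abs, abs_mul, abs_of_nonneg hWp]
        apply mul_le_mul_of_nonneg_right _ hWp
        refine (abs_add_le _ _).trans ?_
        rw [abs_mul, abs_mul, abs_pow]
    _ ≤ ((B + b) ^ 2 + ((b - a) ^ 2 / a) * (B + b) *
          ((∑ i, (X i : ℝ)) + (n : ℝ) * ((m : ℝ) * b))) *
        (Real.exp ((m : ℝ) * (b - a)) ^ n * ∏ i, pois ((m : ℝ) * b) (X i)) := by
        have e2 : (0:ℝ) ≤ (b - a) ^ 2 / a := by positivity
        have e3 : (0:ℝ) ≤ B + b := by positivity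
        apply mul_le_mul _ h4 hWp (by positivity)
        apply add_le_add
        · exact pow_le_pow_left₀ (abs_nonneg _) h1 2
        · apply mul_le_mul _ h3 (abs_nonneg _) (by positivity)
          exact mul_le_mul h2 h1 (abs_nonneg _) e2
    _ = bnd m n a b B X := rfl

lemma measurable_Phi (m n : ℕ) (a b : ℝ) (f : (Fin n → ℕ) → ℝ) (X : Fin n → ℕ) :
    Measurable (fun p => Phi m n a b f X p) := by
  unfold Phi pois
  fun_prop

lemma swap_helper {n : ℕ} {a b : ℝ} (F : (Fin n → ℕ) → ℝ → ℝ) (C : (Fin n → ℕ) → ℝ)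
    (hmeas : ∀ X, Measurable (F X)) (hC : ∀ X, ∀ p ∈ Set.Ioc a b, ‖F X p‖ ≤ C X)
    (hCnn : ∀ X, 0 ≤ C X) (hCs : Summable C) :
    ∫ p in Set.Ioc a b, ∑' X, F X p = ∑' X, ∫ p in Set.Ioc a b, F X p := by
  apply integral_tsum (fun X => (hmeas X).aestronglyMeasurable)
  have h1 : ∀ X, ∫⁻ p in Set.Ioc a b, ‖F X p‖₊ ∂(volume : Measure ℝ) ≤
      ENNReal.ofReal (C X) * volume (Set.Ioc a b) := by
    intro X
    rw [← MeasureTheory.setLIntegral_const]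
    apply MeasureTheory.setLIntegral_mono measurable_const
    intro p hp
    rw [← enorm_eq_nnnorm, ← ofReal_norm]
    exact ENNReal.ofReal_le_ofReal (hC X p hp)
  have h2 : ∑' X : Fin n → ℕ, ENNReal.ofReal (C X) * volume (Set.Ioc a b) < ⊤ := by
    rw [ENNReal.tsum_mul_right, ← ENNReal.ofReal_tsum_of_nonneg hCnn hCs]
    exact ENNReal.mul_lt_top ENNReal.ofReal_lt_top measure_Ioc_lt_top
  exact ((ENNReal.tsum_le_tsum h1).trans_lt h2).ne

lemma summable_integrals {n : ℕ} {a b : ℝ} (hab : a ≤ b) (F : (Fin n → ℕ) → ℝ → ℝ)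
    (hmeas : ∀ X, Measurable (F X))
    (C : (Fin n → ℕ) → ℝ) (hC : ∀ X, ∀ p ∈ Set.Ioc a b, ‖F X p‖ ≤ C X) (hCs : Summable C) :
    Summable (fun X => ∫ p in Set.Ioc a b, F X p) := by
  apply Summable.of_norm_bounded (g := fun X => C X * (b - a)) (hCs.mul_right _)
  intro X
  have h := MeasureTheory.norm_setIntegral_le_of_norm_le_const (μ := volume)
    (s := Set.Ioc a b) (f := F X) measure_Ioc_lt_top (hC X)
  rwa [Real.volume_real_Ioc_of_le hab] at h

def bnd2 (m n : ℕ) (a b : ℝ) (X : Fin n → ℕ) : ℝ :=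
  2 * (b - a) ^ 2 * (Real.exp ((m : ℝ) * (b - a)) ^ n * ∏ i, pois ((m : ℝ) * b) (X i))

lemma bnd2_nonneg {m n : ℕ} {a b : ℝ} (ha : 0 < a) (hab : a ≤ b) (X : Fin n → ℕ) :
    0 ≤ bnd2 m n a b X := by
  have hb : (0:ℝ) ≤ b := (ha.trans_le hab).le
  have h2 := prod_pois_nonneg (l := (m : ℝ) * b) (by positivity) X
  unfold bnd2
  positivity

lemma summable_bnd2 (m : ℕ) {n : ℕ} {a b : ℝ} (ha : 0 < a) (hab : a ≤ b) :
    Summable (bnd2 m n a b) := by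
  have hb : (0:ℝ) ≤ (m : ℝ) * b := by
    have : (0:ℝ) ≤ b := (ha.trans_le hab).le
    positivity
  exact ((hasSum_W hb n).summable.mul_left
    (2 * (b - a) ^ 2 * Real.exp ((m : ℝ) * (b - a)) ^ n)).congr
    (fun X => by unfold bnd2; ring)

lemma measurable_psiW (m : ℕ) {n : ℕ} (a b : ℝ) (X : Fin n → ℕ) :
    Measurable (fun p => psi a b p * ∏ i, pois ((m : ℝ) * p) (X i)) := by
  unfold psi pois
  fun_prop

lemma norm_psiW_le {m n : ℕ} {a b : ℝ} (ha : 0 < a) (X : Fin n → ℕ) {p : ℝ}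
    (hp : p ∈ Set.Ioc a b) :
    ‖psi a b p * ∏ i, pois ((m : ℝ) * p) (X i)‖ ≤ bnd2 m n a b X := by
  obtain ⟨hpa, hpb⟩ := hp
  have hp0 : 0 < p := ha.trans hpa
  have hWp : 0 ≤ ∏ i, pois ((m : ℝ) * p) (X i) := prod_pois_nonneg (by positivity) X
  have h4 := W_le (m := m) ha X hpa.le hpb
  have hpsi : |psi a b p| ≤ 2 * (b - a) ^ 2 := by
    rw [abs_le]
    unfold psi
    constructor <;> nlinarith
  rw [Real.norm_eq_abs, abs_mul, abs_of_nonneg hWp]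
  unfold bnd2
  apply mul_le_mul hpsi h4 hWp (by positivity)

lemma intervalIntegrable_psiW (m : ℕ) {n : ℕ} (a b : ℝ) (X : Fin n → ℕ) (u v : ℝ) :
    IntervalIntegrable (fun p => psi a b p * ∏ i, pois ((m : ℝ) * p) (X i))
      MeasureTheory.volume u v :=
  ((continuous_psi a b).mul (continuous_W _ X)).intervalIntegrable u v

lemma integral_psi (a b : ℝ) : ∫ p in a..b, psi a b p = (b - a) ^ 3 / 12 := by
  have hd : ∀ p : ℝ, HasDerivAt
      (fun q : ℝ => (a + b) / 2 * q ^ 2 - q ^ 3 / 3 - a * b * q - (q - (a + b) / 2) ^ 3 / 3)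
      (psi a b p) p := by
    intro p
    have h1 := (hasDerivAt_pow 2 p).const_mul ((a + b) / 2)
    have h2 := (hasDerivAt_pow 3 p).div_const 3
    have h3 := (hasDerivAt_id p).const_mul (a * b)
    have h4in : HasDerivAt (fun q : ℝ => q - (a + b) / 2) 1 p := (hasDerivAt_id p).sub_const _
    have h4 := ((hasDerivAt_pow 3 (p - (a + b) / 2)).comp p h4in).div_const 3
    have h5 := ((h1.sub h2).sub h3).sub h4
    refine h5.congr_deriv ?_
    unfold psi
    norm_num
    ring
  rw [intervalIntegral.integral_eq_sub_of_hasDerivAt (fun p _ => hd p)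
    ((continuous_psi a b).intervalIntegrable a b)]
  ring

lemma setIntegral_psiW_le (m : ℕ) {n : ℕ} {a b : ℝ} (ha : 0 < a) (hab : a ≤ b)
    (f : (Fin n → ℕ) → ℝ) (X : Fin n → ℕ) :
    ∫ p in Set.Ioc a b, psi a b p * ∏ i, pois ((m : ℝ) * p) (X i) ≤
      ∫ p in Set.Ioc a b, Phi m n a b f X p := by
  rw [← intervalIntegral.integral_of_le hab, ← intervalIntegral.integral_of_le hab,
    integral_Phi_eq m ha hab f X]
  apply intervalIntegral.integral_mono_on hab (intervalIntegrable_psiW m a b X a b)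
    (((continuous_const.add (continuous_psi a b)).mul (continuous_W _ X)).intervalIntegrable a b)
  intro p hp
  have hp0 : (0:ℝ) < p := lt_of_lt_of_le ha hp.1
  have hWp : 0 ≤ ∏ i, pois ((m : ℝ) * p) (X i) :=
    prod_pois_nonneg (by positivity) X
  simp only [Pi.add_apply, Pi.mul_apply]
  nlinarith [sq_nonneg (f X - (a + b) / 2), hWp]

end StmtAux
end StmtAux

open StmtAux in
/-- Fingerprinting lemma for Poisson variables: with `p` uniform on `[1/(2d), 3/(2d)]` and,
conditionally on `p`, `X₁,…,Xₙ` i.i.d. `Poisson(m·p)`,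
`E[(f(X)−p)² + ((p−1/(2d))(3/(2d)−p)/p)·(f(X)−p)·Σᵢ(Xᵢ−m·p)] ≥ 1/(12d²)`
for any `f : ℕⁿ → ℝ` with `0 ≤ f ≤ B`. -/
theorem stmt_7 (m n d : ℕ) (hm : 0 < m) (hn : 0 < n) (hd : 0 < d) (B : ℝ) (hB : 0 ≤ B)
    (f : (Fin n → ℕ) → ℝ) (hf : ∀ X, 0 ≤ f X ∧ f X ≤ B) :
    1 / (12 * (d : ℝ) ^ 2) ≤
      (d : ℝ) * ∫ p in (1 / (2 * (d : ℝ)))..(3 / (2 * (d : ℝ))),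
        ∑' X : Fin n → ℕ,
          ((f X - p) ^ 2 +
              ((p - 1 / (2 * (d : ℝ))) * (3 / (2 * (d : ℝ)) - p) / p) * (f X - p) *
                ∑ i, ((X i : ℝ) - (m : ℝ) * p)) *
            ∏ i, Real.exp (-((m : ℝ) * p)) * ((m : ℝ) * p) ^ (X i) /
              (Nat.factorial (X i) : ℝ) := by
  have hd0 : (0:ℝ) < d := Nat.cast_pos.mpr hd
  set a : ℝ := 1 / (2 * (d : ℝ)) with ha_def
  set b : ℝ := 3 / (2 * (d : ℝ)) with hb_def
  have ha : 0 < a := by rw [ha_def]; positivity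
  have h2d : (0:ℝ) < 2 * d := by positivity
  have hab : a ≤ b := by
    rw [ha_def, hb_def, div_le_div_iff₀ h2d h2d]
    nlinarith
  have hrw : ∀ p : ℝ,
      (∑' X : Fin n → ℕ,
        ((f X - p) ^ 2 +
            ((p - a) * (b - p) / p) * (f X - p) * ∑ i, ((X i : ℝ) - (m : ℝ) * p)) *
          ∏ i, Real.exp (-((m : ℝ) * p)) * ((m : ℝ) * p) ^ (X i) /
            (Nat.factorial (X i) : ℝ))
      = ∑' X : Fin n → ℕ, Phi m n a b f X p := by
    intro p
    apply tsum_congr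
    intro X
    have hs : (∑ i, ((X i : ℝ) - (m : ℝ) * p))
        = (∑ i, (X i : ℝ)) - (n : ℝ) * ((m : ℝ) * p) := by
      rw [Finset.sum_sub_distrib, Finset.sum_const, Finset.card_univ, Fintype.card_fin,
        nsmul_eq_mul]
    rw [hs]
    rfl
  rw [intervalIntegral.integral_of_le hab,
    MeasureTheory.setIntegral_congr_fun measurableSet_Ioc (fun p _ => hrw p)]
  have hswap1 : ∫ p in Set.Ioc a b, ∑' X : Fin n → ℕ, Phi m n a b f X p
      = ∑' X : Fin n → ℕ, ∫ p in Set.Ioc a b, Phi m n a b f X p :=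
    swap_helper _ (bnd m n a b B) (fun X => measurable_Phi m n a b f X)
      (fun X p hp => norm_Phi_le ha hab hB hf X hp)
      (bnd_nonneg ha hab hB) (summable_bnd m ha hab B)
  rw [hswap1]
  have hsum1 : Summable (fun X : Fin n → ℕ => ∫ p in Set.Ioc a b, Phi m n a b f X p) :=
    summable_integrals hab _ (fun X => measurable_Phi m n a b f X) (bnd m n a b B)
      (fun X p hp => norm_Phi_le ha hab hB hf X hp) (summable_bnd m ha hab B)
  have hsum2 : Summable (fun X : Fin n → ℕ =>
      ∫ p in Set.Ioc a b, psi a b p * ∏ i, pois ((m : ℝ) * p) (X i)) :=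
    summable_integrals hab _ (fun X => measurable_psiW m a b X) (bnd2 m n a b)
      (fun X p hp => norm_psiW_le ha X hp) (summable_bnd2 m ha hab)
  have h2 := hsum2.tsum_le_tsum (fun X => setIntegral_psiW_le m ha hab f X) hsum1
  have hswap2 : ∫ p in Set.Ioc a b,
        ∑' X : Fin n → ℕ, psi a b p * ∏ i, pois ((m : ℝ) * p) (X i)
      = ∑' X : Fin n → ℕ, ∫ p in Set.Ioc a b, psi a b p * ∏ i, pois ((m : ℝ) * p) (X i) :=
    swap_helper _ (bnd2 m n a b) (fun X => measurable_psiW m a b X)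
      (fun X p hp => norm_psiW_le ha X hp) (bnd2_nonneg ha hab) (summable_bnd2 m ha hab)
  have hval : (∑' X : Fin n → ℕ,
      ∫ p in Set.Ioc a b, psi a b p * ∏ i, pois ((m : ℝ) * p) (X i)) = (b - a) ^ 3 / 12 := by
    rw [← hswap2]
    have heq : Set.EqOn
        (fun p => ∑' X : Fin n → ℕ, psi a b p * ∏ i, pois ((m : ℝ) * p) (X i))
        (psi a b) (Set.Ioc a b) := by
      intro p hp
      have hp0 : (0:ℝ) < p := ha.trans hp.1
      have hl : (0:ℝ) ≤ (m : ℝ) * p := by positivity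
      simp only
      rw [tsum_mul_left, (hasSum_W hl n).tsum_eq, mul_one]
    rw [MeasureTheory.setIntegral_congr_fun measurableSet_Ioc heq,
      ← intervalIntegral.integral_of_le hab, integral_psi]
  rw [hval] at h2
  have hfinal : (d : ℝ) * ((b - a) ^ 3 / 12)
      ≤ (d : ℝ) * ∑' X : Fin n → ℕ, ∫ p in Set.Ioc a b, Phi m n a b f X p :=
    mul_le_mul_of_nonneg_left h2 hd0.le
  refine le_trans (le_of_eq ?_) hfinal
  rw [ha_def, hb_def]
  field_simp
  ring
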